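/- Let $p$ be a prime, $V$ an $\mathbb{F}_p$-vector space, and $(x_1,\dots,x_k)\in(V\setminus\{0\})^k$ a solution to a homogeneous system $\sum_i a_{j,i}x_i=0$ ($j\in[m]$) whose rows sum to zero. Let $I\subseteq[k]$ be an admissible subset of maximum weight and $U=\operatorname{span}(x_i: i\in I)$. Then there is a partition $[k]\setminus I=J_1\cup\dots\cup J_t$ with $|J_h|\ge 2$ for all $h$, and distinct one-dimensional subspaces $W_1,\dots,W_t\subseteq V/U$, such that $\operatorname{span}(\operatorname{proj}_{V/U}(x_j))=W_h$ for all $h$ and all $j\in J_h$. -/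

import Mathlib

/-- A subset `I ⊆ [k]` is admissible for `(x₁,…,x_k)` if the `x_i`, `i ∈ I`, are linearly
independent and `x_j ∉ span(x_i : i ∈ I)` for all `j ∉ I`. -/
def Admissible (p : ℕ) {k : ℕ} {V : Type} [AddCommGroup V] [Module (ZMod p) V]
    (x : Fin k → V) (I : Finset (Fin k)) : Prop :=
  LinearIndependent (ZMod p) (fun i : I => x i.1) ∧
  ∀ j, j ∉ I → x j ∉ Submodule.span (ZMod p) (x '' ↑I)

/-- The weight of an admissible set `I`:
`(k+1)·|I| + |{span(proj_{V/U}(x_j)) : j ∈ [k] \ I}|` where `U = span(x_i : i ∈ I)`. -/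
noncomputable def weight (p : ℕ) {k : ℕ} {V : Type} [AddCommGroup V] [Module (ZMod p) V]
    (x : Fin k → V) (I : Finset (Fin k)) : ℕ :=
  (k + 1) * I.card +
  Set.ncard {W : Submodule (ZMod p) (V ⧸ Submodule.span (ZMod p) (x '' ↑I)) |
    ∃ j, j ∉ I ∧ W = Submodule.span (ZMod p) {Submodule.Quotient.mk (x j)}}

/-- The weight `ω(x₁,…,x_k)`: the maximum weight of an admissible subset. -/
noncomputable def omegaWt (p : ℕ) {k : ℕ} {V : Type} [AddCommGroup V] [Module (ZMod p) V]
    (x : Fin k → V) : ℕ :=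
  sSup {w : ℕ | ∃ I : Finset (Fin k), Admissible p x I ∧ w = weight p x I}

/-- let `I` be a maximum-weight admissible subset for a solution
`(x₁,…,x_k)` (all `x_i ≠ 0`) of a homogeneous system whose rows sum to zero, and
`U = span(x_i : i ∈ I)`. Then `[k] \ I` partitions into parts `J₁,…,J_t` of size at
least 2, with distinct one-dimensional subspaces `W₁,…,W_t ⊆ V/U` such that
`span(proj_{V/U}(x_j)) = W_h` for all `j ∈ J_h`. -/
theorem stmt_16 (p m k : ℕ) [Fact p.Prime] {V : Type} [AddCommGroup V] [Module (ZMod p) V]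
    (a : Fin m → Fin k → ZMod p) (ha : ∀ j, ∑ i : Fin k, a j i = 0)
    (x : Fin k → V) (hx0 : ∀ i, x i ≠ 0)
    (hsol : ∀ j : Fin m, ∑ i : Fin k, a j i • x i = 0)
    (I : Finset (Fin k)) (hI : Admissible p x I)
    (hmax : ∀ I' : Finset (Fin k), Admissible p x I' → weight p x I' ≤ weight p x I) :
    ∃ (t : ℕ) (J : Fin t → Finset (Fin k))
      (W : Fin t → Submodule (ZMod p) (V ⧸ Submodule.span (ZMod p) (x '' ↑I))),
      (∀ h h' : Fin t, h ≠ h' → Disjoint (J h) (J h')) ∧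
      (∀ j : Fin k, j ∉ I ↔ ∃ h, j ∈ J h) ∧
      (∀ h, 2 ≤ (J h).card) ∧
      Function.Injective W ∧
      (∀ h, Module.finrank (ZMod p) (W h) = 1) ∧
      (∀ h, ∀ j ∈ J h,
        Submodule.span (ZMod p) {Submodule.Quotient.mk (x j)} = W h) := by
  classical
  set U := Submodule.span (ZMod p) (x '' ↑I) with hU
  set f : Fin k → Submodule (ZMod p) (V ⧸ U) :=
    fun j => Submodule.span (ZMod p) {Submodule.Quotient.mk (x j)} with hf
  -- basic facts
  have hmkne : ∀ j ∉ I, (Submodule.Quotient.mk (x j) : V ⧸ U) ≠ 0 := by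
    intro j hj h0
    rw [Submodule.Quotient.mk_eq_zero] at h0
    exact hI.2 j hj h0
  -- if two nonzero quotient classes satisfy mk x j' ∈ f j0 then f j' = f j0
  have hspan_eq : ∀ j' j0, j' ∉ I → (Submodule.Quotient.mk (x j') : V ⧸ U) ∈ f j0 →
      f j' = f j0 := by
    intro j' j0 hj' hmem
    rw [hf, Submodule.mem_span_singleton] at hmem
    obtain ⟨c, hc⟩ := hmem
    have hc0 : c ≠ 0 := by
      rintro rfl
      rw [zero_smul] at hc
      exact hmkne j' hj' hc.symm
    apply le_antisymm
    · rw [hf, Submodule.span_singleton_le_iff_mem, ← hc]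
      exact Submodule.smul_mem _ _ (Submodule.mem_span_singleton_self _)
    · rw [hf, Submodule.span_singleton_le_iff_mem]
      have : Submodule.Quotient.mk (x j0) = c⁻¹ • (Submodule.Quotient.mk (x j') : V ⧸ U) := by
        rw [← hc, smul_smul, inv_mul_cancel₀ hc0, one_smul]
      rw [this]
      exact Submodule.smul_mem _ _ (Submodule.mem_span_singleton_self _)
  set S : Finset (Submodule (ZMod p) (V ⧸ U)) := Iᶜ.image f with hS
  have hfS : ∀ j ∉ I, f j ∈ S := fun j hj =>
    Finset.mem_image_of_mem f (Finset.mem_compl.2 hj)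
  set e := S.equivFin with he
  refine ⟨S.card, fun h => Iᶜ.filter (fun j => f j = (e.symm h).1),
    fun h => (e.symm h).1, ?_, ?_, ?_, ?_, ?_, ?_⟩
  · -- disjoint
    intro h h' hne
    rw [Finset.disjoint_filter]
    intro j _ hjh hjh'
    exact hne (e.symm.injective (Subtype.ext (hjh ▸ hjh')))
  · -- cover
    intro j
    constructor
    · intro hj
      refine ⟨e ⟨f j, hfS j hj⟩, ?_⟩
      rw [Finset.mem_filter]
      exact ⟨Finset.mem_compl.2 hj, by rw [Equiv.symm_apply_apply]⟩
    · rintro ⟨h, hjh⟩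
      exact Finset.mem_compl.1 (Finset.mem_filter.1 hjh).1
  · -- cardinality ≥ 2
    intro h
    -- the class is nonempty
    obtain ⟨j0, hj0c, hfj0⟩ := Finset.mem_image.1 (e.symm h).2
    have hj0 : j0 ∉ I := Finset.mem_compl.1 hj0c
    have hj0mem : j0 ∈ Iᶜ.filter (fun j => f j = (e.symm h).1) :=
      Finset.mem_filter.2 ⟨hj0c, hfj0⟩
    by_contra hlt
    push_neg at hlt
    interval_cases hcard : (Iᶜ.filter (fun j => f j = (e.symm h).1)).card
    · exact absurd hcard (Finset.card_ne_zero_of_mem hj0mem)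
    · -- singleton class {j0}; show insert j0 I is admissible
      rw [Finset.card_eq_one] at hcard
      obtain ⟨j1, hJ⟩ := hcard
      have hj0j1 : j0 = j1 := by
        have := hJ ▸ hj0mem; simpa using this
      subst hj0j1
      have hadm : Admissible p x (insert j0 I) := by
        constructor
        · -- linear independence
          have hinj : Set.InjOn x ↑I := by
            intro i hi i' hi' hxe
            have := hI.1.injective (a₁ := ⟨i, hi⟩) (a₂ := ⟨i', hi'⟩) hxe
            exact congrArg Subtype.val this
          have hxj0 : x j0 ∉ Submodule.span (ZMod p) (x '' ↑I) := hI.2 j0 hj0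
          have hinj' : Set.InjOn x (insert j0 ↑I) := by
            intro i hi i' hi' hxe
            rcases hi with rfl | hi <;> rcases hi' with rfl | hi'
            · rfl
            · have hm : x i ∈ x '' ↑I := by rw [hxe]; exact Set.mem_image_of_mem x hi'
              exact (hxj0 (Submodule.subset_span hm)).elim
            · have hm : x i' ∈ x '' ↑I := by rw [← hxe]; exact Set.mem_image_of_mem x hi
              exact (hxj0 (Submodule.subset_span hm)).elim
            · exact hinj hi hi' hxe
          have hLIset : LinearIndependent (ZMod p) (fun v : x '' ↑I => (v : V)) :=
            (linearIndepOn_iff_image hinj).1 hI.1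
          have hLIins : LinearIndependent (ZMod p)
              (fun v : ↥(insert (x j0) (x '' ↑I)) => (v : V)) :=
            LinearIndepOn.id_insert hLIset hxj0
          have him : x '' ↑(insert j0 I) = insert (x j0) (x '' ↑I) := by
            rw [Finset.coe_insert, Set.image_insert_eq]
          have := (linearIndepOn_iff_image (R := ZMod p) (f := x) (s := ↑(insert j0 I))
            (by rw [Finset.coe_insert]; exact hinj')).2
          apply this
          rw [him]
          exact hLIins
        · -- second condition
          intro j' hj' hmem
          have hj'I : j' ∉ I := fun hc => hj' (Finset.mem_insert_of_mem hc)
          have him : x '' ↑(insert j0 I) = insert (x j0) (x '' ↑I) := by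
            rw [Finset.coe_insert, Set.image_insert_eq]
          rw [him, Submodule.mem_span_insert] at hmem
          obtain ⟨c, z, hz, hxj'⟩ := hmem
          have hmk : (Submodule.Quotient.mk (x j') : V ⧸ U) = c • Submodule.Quotient.mk (x j0) := by
            rw [hxj']
            have hz0 : (Submodule.Quotient.mk z : V ⧸ U) = 0 :=
              (Submodule.Quotient.mk_eq_zero _).2 hz
            rw [Submodule.Quotient.mk_add, Submodule.Quotient.mk_smul, hz0, add_zero]
          have : f j' = f j0 := by
            apply hspan_eq j' j0 hj'I
            rw [hmk]
            exact Submodule.smul_mem _ _ (Submodule.mem_span_singleton_self _)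
          have hj'mem : j' ∈ Iᶜ.filter (fun j => f j = (e.symm h).1) :=
            Finset.mem_filter.2 ⟨Finset.mem_compl.2 hj'I, this.trans hfj0⟩
          rw [hJ, Finset.mem_singleton] at hj'mem
          exact hj' (hj'mem ▸ Finset.mem_insert_self j0 I)
      -- weight comparison
      have hw := hmax _ hadm
      have h1 : (k + 1) * (I.card + 1) ≤ weight p x (insert j0 I) := by
        rw [weight, Finset.card_insert_of_notMem hj0]
        exact Nat.le_add_right _ _
      have h2 : weight p x I ≤ (k + 1) * I.card + k := by
        rw [weight]
        apply Nat.add_le_add_left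
        refine le_trans (Set.ncard_le_ncard (t := f '' {j | j ∉ I}) ?_ ?_) ?_
        · rintro W ⟨j, hj, hW⟩
          exact ⟨j, hj, hW.symm⟩
        · exact Set.toFinite _
        calc (f '' {j | j ∉ I}).ncard ≤ {j | j ∉ I}.ncard :=
              Set.ncard_image_le (Set.toFinite _)
          _ ≤ (Set.univ : Set (Fin k)).ncard :=
              Set.ncard_le_ncard (Set.subset_univ _) (Set.toFinite _)
          _ = k := by rw [Set.ncard_univ, Nat.card_eq_fintype_card, Fintype.card_fin]
      have hchain : (k + 1) * (I.card + 1) ≤ (k + 1) * I.card + k :=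
        le_trans h1 (le_trans hw h2)
      rw [Nat.mul_add, Nat.mul_one] at hchain
      omega
  · -- injectivity of W
    intro h h' hWe
    exact e.symm.injective (Subtype.ext hWe)
  · -- finrank 1
    intro h
    obtain ⟨j0, hj0c, hfj0⟩ := Finset.mem_image.1 (e.symm h).2
    show Module.finrank (ZMod p) ↥(↑(e.symm h) : Submodule (ZMod p) (V ⧸ U)) = 1
    rw [← hfj0, hf]
    exact finrank_span_singleton (hmkne j0 (Finset.mem_compl.1 hj0c))
  · -- spans agree
    intro h j hjmem
    exact (Finset.mem_filter.1 hjmem).2
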